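/- arXiv:1902.01891 — 5 statements merged into one kernel-verified Lean document; each statement's English description precedes it below -/
import Mathlib

section
/- Let F be a finite field with |F| = q elements and char(F) ≠ 2, and let l ≥ 0 be an integer. For all Y_1, Y_2 ∈ UT_2(F) symmetric for ⋆, the element l·Y_1(Y_2^{q+l−1} − Y_2^l) + Y_1^q Y_2^l lies in the center Z(UT_2(F)) (where l acts via the natural map ℕ → F). -/
open scoped BigOperators

set_option maxHeartbeats 1000000
set_option synthInstance.maxHeartbeats 400000

/-- The algebra of 2×2 upper triangular matrices over `F`. -/
def UT2 (F : Type*) [Field F] : Subalgebra F (Matrix (Fin 2) (Fin 2) F) where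
  carrier := {M | M 1 0 = 0}
  mul_mem' := by
    intro a b ha hb
    simp only [Set.mem_setOf_eq] at *
    rw [Matrix.mul_apply, Fin.sum_univ_two, ha, hb]
    ring
  one_mem' := by simp [Matrix.one_apply]
  add_mem' := by
    intro a b ha hb
    simp only [Set.mem_setOf_eq] at *
    simp [Matrix.add_apply, ha, hb]
  zero_mem' := by simp
  algebraMap_mem' := by
    intro r
    simp [Matrix.algebraMap_matrix_apply]

theorem mem_UT2 (F : Type*) [Field F] {M : Matrix (Fin 2) (Fin 2) F} :
    M ∈ UT2 F ↔ M 1 0 = 0 := Iff.rfl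

/-- The involution `⋆` on `UT2 F`: `(a c; 0 b) ↦ (b c; 0 a)`. -/
def starUT (F : Type*) [Field F] (M : ↥(UT2 F)) : ↥(UT2 F) :=
  ⟨!![M.1 1 1, M.1 0 1; 0, M.1 0 0], by rw [mem_UT2]; simp⟩

/-- The involution `s` on `UT2 F`: `(a c; 0 b) ↦ (b -c; 0 a)`. -/
def starS (F : Type*) [Field F] (M : ↥(UT2 F)) : ↥(UT2 F) :=
  ⟨!![M.1 1 1, -(M.1 0 1); 0, M.1 0 0], by rw [mem_UT2]; simp⟩

/-- The free unital associative `F`-algebra `F⟨Y ∪ Z⟩` on the variables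
`y_0, y_1, …` (indexed by `Sum.inl`) and `z_0, z_1, …` (indexed by `Sum.inr`). -/
abbrev FA (F : Type*) [Field F] := FreeAlgebra F (ℕ ⊕ ℕ)

noncomputable def yv (F : Type*) [Field F] (i : ℕ) : FA F := FreeAlgebra.ι F (Sum.inl i)
noncomputable def zv (F : Type*) [Field F] (i : ℕ) : FA F := FreeAlgebra.ι F (Sum.inr i)

noncomputable def fStarAux (F : Type*) [Field F] : FA F →ₐ[F] (FA F)ᵐᵒᵖ :=
  FreeAlgebra.lift F fun v =>
    MulOpposite.op (Sum.elim (fun i => FreeAlgebra.ι F (Sum.inl i))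
      (fun i => -FreeAlgebra.ι F (Sum.inr i)) v)

/-- The involution `*` on `F⟨Y ∪ Z⟩`: the unique `F`-linear anti-automorphism
with `y_i* = y_i` and `z_i* = -z_i`. -/
noncomputable def fStar (F : Type*) [Field F] (f : FA F) : FA F := (fStarAux F f).unop

/-- A symmetric polynomial of `F⟨Y ∪ Z⟩`. -/
def IsSym (F : Type*) [Field F] (f : FA F) : Prop := fStar F f = f
/-- A skew polynomial of `F⟨Y ∪ Z⟩`. -/
def IsSkew (F : Type*) [Field F] (f : FA F) : Prop := fStar F f = -f

/-- A substitution relative to an involution `σ` on `UT2 F`: an algebra homomorphism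
sending each `y_i` to a symmetric element and each `z_i` to a skew-symmetric element. -/
def IsSubstWith (F : Type*) [Field F] (σ : ↥(UT2 F) → ↥(UT2 F))
    (φ : FA F →ₐ[F] ↥(UT2 F)) : Prop :=
  (∀ i, σ (φ (yv F i)) = φ (yv F i)) ∧ (∀ i, σ (φ (zv F i)) = -(φ (zv F i)))

/-- The `*`-polynomial identities of `(UT2 F, σ)`. -/
def IdWith (F : Type*) [Field F] (σ : ↥(UT2 F) → ↥(UT2 F)) : Submodule F (FA F) where
  carrier := {f | ∀ φ : FA F →ₐ[F] ↥(UT2 F), IsSubstWith F σ φ → φ f = 0}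
  add_mem' := by
    intro a b ha hb φ hφ
    rw [map_add, ha φ hφ, hb φ hφ, add_zero]
  zero_mem' := by intro φ _; exact map_zero φ
  smul_mem' := by
    intro c x hx φ hφ
    rw [map_smul, hx φ hφ, smul_zero]

/-- The `*`-central polynomials of `(UT2 F, σ)`. -/
def CWith (F : Type*) [Field F] (σ : ↥(UT2 F) → ↥(UT2 F)) : Submodule F (FA F) where
  carrier := {f | ∀ φ : FA F →ₐ[F] ↥(UT2 F), IsSubstWith F σ φ →
    φ f ∈ Subalgebra.center F ↥(UT2 F)}
  add_mem' := by
    intro a b ha hb φ hφ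
    rw [map_add]; exact add_mem (ha φ hφ) (hb φ hφ)
  zero_mem' := by intro φ _; rw [map_zero]; exact zero_mem _
  smul_mem' := by
    intro c x hx φ hφ
    rw [map_smul]; exact Subalgebra.smul_mem _ (hx φ hφ) c

/-- `⟨z₁z₂⟩^{TS(*)}`: the `F`-linear span of all products of two skew polynomials. -/
def TSz (F : Type*) [Field F] : Submodule F (FA F) :=
  Submodule.span F {f : FA F | ∃ u v, IsSkew F u ∧ IsSkew F v ∧ f = u * v}

private lemma pow_ut_mat {F : Type*} [Field F] (a c : F) (n : ℕ) :
    (!![a, c; 0, a] : Matrix (Fin 2) (Fin 2) F) ^ n =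
      !![a ^ n, (n : F) * a ^ (n - 1) * c; 0, a ^ n] := by
  induction n with
  | zero => simp [Matrix.one_fin_two]
  | succ k ih =>
    rw [pow_succ, ih, Matrix.mul_fin_two]
    rcases k with _ | m
    · norm_num
    · have h1 : (m + 1 + 1 : ℕ) - 1 = m + 1 := rfl
      have h2 : (m + 1 : ℕ) - 1 = m := rfl
      rw [h1, h2]
      push_cast
      ext i j
      fin_cases i <;> fin_cases j <;> simp [pow_succ] <;> ring

private lemma mem_center_UT2 {F : Type*} [Field F] (u : ↥(UT2 F))
    (h0 : u.1 0 1 = 0) (hd : u.1 0 0 = u.1 1 1) :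
    u ∈ Subalgebra.center F ↥(UT2 F) := by
  rw [Subalgebra.mem_center_iff]
  intro g
  apply Subtype.ext
  show g.1 * u.1 = u.1 * g.1
  have hu : u.1 1 0 = 0 := u.2
  have hg : g.1 1 0 = 0 := g.2
  rw [Matrix.eta_fin_two u.1, Matrix.eta_fin_two g.1, h0, hd, hu, hg,
    Matrix.mul_fin_two, Matrix.mul_fin_two]
  ring_nf

theorem stmt_12 (F : Type*) [Field F] [Fintype F] (q : ℕ) (hq : Fintype.card F = q)
    (hchar : ringChar F ≠ 2) (l : ℕ)
    (Y₁ Y₂ : ↥(UT2 F)) (h1 : starUT F Y₁ = Y₁) (h2 : starUT F Y₂ = Y₂) :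
    (l : F) • (Y₁ * (Y₂ ^ (q + l - 1) - Y₂ ^ l)) + Y₁ ^ q * Y₂ ^ l ∈
      Subalgebra.center F ↥(UT2 F) := by
  subst hq
  have hq0 : ((Fintype.card F : ℕ) : F) = 0 := Nat.cast_card_eq_zero F
  have hpc : ∀ x : F, x ^ Fintype.card F = x := FiniteField.pow_card
  have ha1 : Y₁.1 1 1 = Y₁.1 0 0 := by
    have := congrArg (fun m : ↥(UT2 F) => m.1 0 0) h1
    simpa [starUT] using this
  have ha2 : Y₂.1 1 1 = Y₂.1 0 0 := by
    have := congrArg (fun m : ↥(UT2 F) => m.1 0 0) h2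
    simpa [starUT] using this
  have hz1 : Y₁.1 1 0 = 0 := Y₁.2
  have hz2 : Y₂.1 1 0 = 0 := Y₂.2
  set a₁ := Y₁.1 0 0 with ha₁
  set c₁ := Y₁.1 0 1 with hc₁
  set a₂ := Y₂.1 0 0 with ha₂
  set c₂ := Y₂.1 0 1 with hc₂
  have hY1 : Y₁.1 = !![a₁, c₁; 0, a₁] := by
    conv_lhs => rw [Matrix.eta_fin_two Y₁.1]
    rw [ha1, hz1]
  have hY2 : Y₂.1 = !![a₂, c₂; 0, a₂] := by
    conv_lhs => rw [Matrix.eta_fin_two Y₂.1]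
    rw [ha2, hz2]
  set q := Fintype.card F with hqd
  have hval : (((l : F) • (Y₁ * (Y₂ ^ (q + l - 1) - Y₂ ^ l)) + Y₁ ^ q * Y₂ ^ l :
      ↥(UT2 F)) : Matrix (Fin 2) (Fin 2) F)
      = (l : F) • (Y₁.1 * (Y₂.1 ^ (q + l - 1) - Y₂.1 ^ l)) + Y₁.1 ^ q * Y₂.1 ^ l := by
    push_cast
    rfl
  apply mem_center_UT2
  · show (((l : F) • (Y₁ * (Y₂ ^ (q + l - 1) - Y₂ ^ l)) + Y₁ ^ q * Y₂ ^ l :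
      ↥(UT2 F)) : Matrix (Fin 2) (Fin 2) F) 0 1 = 0
    rw [hval, hY1, hY2, pow_ut_mat, pow_ut_mat, pow_ut_mat]
    simp [Matrix.mul_apply, Fin.sum_univ_two]
    rw [hpc a₁, hq0]
    rcases l with _ | _ | m
    · push_cast; ring
    · have e1 : q + 1 - 1 = q := rfl
      rw [e1, hpc a₂]
      push_cast [hq0]
      ring
    · have e1 : q + (m + 2) - 1 = q + (m + 1) := by omega
      have e2 : q + (m + 1) - 1 = q + m := by
        have : 1 ≤ q := Fintype.card_pos
        omega
      have e3 : (m + 2 : ℕ) - 1 = m + 1 := rfl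
      rw [e1, e2, e3]
      have p1 : a₂ ^ (q + (m + 1)) = a₂ ^ (m + 2) := by
        rw [pow_add, hpc a₂]; ring
      have p2 : a₂ ^ (q + m) = a₂ ^ (m + 1) := by
        rw [pow_add, hpc a₂]; ring
      rw [p1, p2]
      push_cast [hq0]
      ring
  · show (((l : F) • (Y₁ * (Y₂ ^ (q + l - 1) - Y₂ ^ l)) + Y₁ ^ q * Y₂ ^ l :
      ↥(UT2 F)) : Matrix (Fin 2) (Fin 2) F) 0 0 = _
    rw [hval, hY1, hY2, pow_ut_mat, pow_ut_mat, pow_ut_mat]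
    simp [Matrix.mul_apply, Fin.sum_univ_two]
end

section
/- Let F be a finite field with |F| = q elements and char(F) ≠ 2. For all integers l ≥ 0 and n ≥ 0, the polynomial l·y_1⋯y_n(y_{n+1}^{q+l−1} − y_{n+1}^l) + y_1^q⋯y_n^q y_{n+1}^l belongs to V + Id(UT_2(F), ⋆). -/
open scoped BigOperators

set_option maxHeartbeats 1000000
set_option synthInstance.maxHeartbeats 400000

/-- `V`: the `F`-linear span of all polynomials
`l·g₁(g₂^{q+l-1} - g₂^l) + g₁^q g₂^l` with `l ∈ ℕ` and `g₁, g₂` symmetric. -/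
def Vspan (F : Type*) [Field F] (q : ℕ) : Submodule F (FA F) :=
  Submodule.span F {f : FA F | ∃ l : ℕ, ∃ g₁ g₂, IsSym F g₁ ∧ IsSym F g₂ ∧
    f = (l : F) • (g₁ * (g₂ ^ (q + l - 1) - g₂ ^ l)) + g₁ ^ q * g₂ ^ l}

section Aux
variable (F : Type*) [Field F]

lemma fStar_mul (a b : FA F) : fStar F (a * b) = fStar F b * fStar F a := by
  unfold fStar; rw [map_mul]; rfl

lemma fStar_one : fStar F (1 : FA F) = 1 := by
  unfold fStar; rw [map_one]; rfl

lemma fStar_add (a b : FA F) : fStar F (a + b) = fStar F a + fStar F b := by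
  unfold fStar; rw [map_add]; rfl

lemma fStar_smul (c : F) (a : FA F) : fStar F (c • a) = c • fStar F a := by
  unfold fStar; rw [map_smul]; rfl

lemma fStar_yv (i : ℕ) : fStar F (yv F i) = yv F i := by
  unfold fStar fStarAux yv
  simp [FreeAlgebra.lift_ι_apply]

lemma fStar_prod (L : List (FA F)) (h : ∀ x ∈ L, fStar F x = x) :
    fStar F L.prod = L.reverse.prod := by
  induction L with
  | nil => simpa using fStar_one F
  | cons a t ih =>
    have ha : fStar F a = a := h a (List.mem_cons_self)
    have ht := ih (fun x hx => h x (List.mem_cons_of_mem _ hx))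
    simp only [List.prod_cons, List.reverse_cons, List.prod_append, List.prod_cons,
      List.prod_nil, mul_one]
    rw [fStar_mul, ha, ht]

/-- diagonal-equal condition on upper triangular matrices -/
def Deq {F : Type*} [Field F] (A : ↥(UT2 F)) : Prop := A.1 0 0 = A.1 1 1

lemma deq_of_star {A : ↥(UT2 F)} (h : starUT F A = A) : Deq A := by
  have := congrArg (fun M : ↥(UT2 F) => (M : Matrix (Fin 2) (Fin 2) F) 0 0) h
  simp only [starUT] at this
  simpa [Deq] using this.symm

lemma deq_one : Deq (1 : ↥(UT2 F)) := by
  simp [Deq, Matrix.one_apply]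

lemma mul_comm_deq {A B : ↥(UT2 F)} (hA : Deq A) (hB : Deq B) : A * B = B * A := by
  have hA0 := A.2
  have hB0 := B.2
  rw [mem_UT2] at hA0 hB0
  apply Subtype.ext
  show (A : Matrix (Fin 2) (Fin 2) F) * B = (B : Matrix (Fin 2) (Fin 2) F) * A
  ext i j
  have hA' : (A : Matrix (Fin 2) (Fin 2) F) 0 0 = A.1 1 1 := hA
  have hB' : (B : Matrix (Fin 2) (Fin 2) F) 0 0 = B.1 1 1 := hB
  fin_cases i <;> fin_cases j <;>
    simp [Matrix.mul_apply, Fin.sum_univ_two, hA0, hB0, hA', hB'] <;> ring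

lemma deq_mul {A B : ↥(UT2 F)} (hA : Deq A) (hB : Deq B) : Deq (A * B) := by
  have hA0 := A.2
  have hB0 := B.2
  rw [mem_UT2] at hA0 hB0
  show ((A : Matrix (Fin 2) (Fin 2) F) * B) 0 0 = ((A : Matrix (Fin 2) (Fin 2) F) * B) 1 1
  have hA' : (A : Matrix (Fin 2) (Fin 2) F) 0 0 = A.1 1 1 := hA
  have hB' : (B : Matrix (Fin 2) (Fin 2) F) 0 0 = B.1 1 1 := hB
  simp [Matrix.mul_apply, Fin.sum_univ_two, hA0, hB0, hA', hB']

lemma deq_prod {L : List ↥(UT2 F)} (h : ∀ A ∈ L, Deq A) : Deq L.prod := by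
  induction L with
  | nil => simpa using deq_one F
  | cons a t ih =>
    rw [List.prod_cons]
    exact deq_mul F (h a (List.mem_cons_self)) (ih fun x hx => h x (List.mem_cons_of_mem _ hx))

lemma prod_reverse_deq {L : List ↥(UT2 F)} (h : ∀ A ∈ L, Deq A) :
    L.reverse.prod = L.prod := by
  induction L with
  | nil => rfl
  | cons a t ih =>
    have ht := ih (fun x hx => h x (List.mem_cons_of_mem _ hx))
    rw [List.reverse_cons, List.prod_append, List.prod_cons, List.prod_nil, mul_one, ht,
      List.prod_cons, mul_comm_deq F (deq_prod F fun x hx => h x (List.mem_cons_of_mem _ hx))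
        (h a (List.mem_cons_self))]

lemma prod_pow_deq {L : List ↥(UT2 F)} (h : ∀ A ∈ L, Deq A) (m : ℕ) :
    L.prod ^ m = (L.map (· ^ m)).prod := by
  induction L with
  | nil => simp
  | cons a t ih =>
    have ht := ih (fun x hx => h x (List.mem_cons_of_mem _ hx))
    have hc : Commute a t.prod :=
      mul_comm_deq F (h a (List.mem_cons_self))
        (deq_prod F fun x hx => h x (List.mem_cons_of_mem _ hx))
    rw [List.prod_cons, List.map_cons, List.prod_cons, ← ht]
    exact hc.mul_pow m

end Aux
theorem stmt_13 (F : Type*) [Field F] [Fintype F] (q : ℕ) (hq : Fintype.card F = q)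
    (hchar : ringChar F ≠ 2) (l n : ℕ) :
    (l : F) • ((List.ofFn fun i : Fin n => yv F i).prod *
        ((yv F n) ^ (q + l - 1) - (yv F n) ^ l)) +
      (List.ofFn fun i : Fin n => (yv F i) ^ q).prod * (yv F n) ^ l ∈
      Vspan F q ⊔ IdWith F (starUT F) := by
  set L : List (FA F) := List.ofFn fun i : Fin n => yv F i with hL
  set P : FA F := L.prod with hP
  set Pq : FA F := (List.ofFn fun i : Fin n => yv F i ^ q).prod with hPq
  set Y : FA F := yv F n with hY
  have hLsym : ∀ x ∈ L, fStar F x = x := by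
    intro x hx
    rw [hL, List.mem_ofFn] at hx
    obtain ⟨i, rfl⟩ := hx
    exact fStar_yv F i
  have hLrsym : ∀ x ∈ L.reverse, fStar F x = x := by
    intro x hx; exact hLsym x (List.mem_reverse.mp hx)
  set g₁ : FA F := (2 : F)⁻¹ • (P + L.reverse.prod) with hg₁def
  have hg₁ : IsSym F g₁ := by
    show fStar F g₁ = g₁
    rw [hg₁def, fStar_smul, fStar_add, fStar_prod F L hLsym, fStar_prod F L.reverse hLrsym,
      List.reverse_reverse, add_comm]
  have hYsym : IsSym F Y := fStar_yv F n
  set v : FA F := (l : F) • (g₁ * (Y ^ (q + l - 1) - Y ^ l)) + g₁ ^ q * Y ^ l with hv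
  have hvV : v ∈ Vspan F q :=
    Submodule.subset_span ⟨l, g₁, Y, hg₁, hYsym, rfl⟩
  set T : FA F := (l : F) • (P * (Y ^ (q + l - 1) - Y ^ l)) + Pq * Y ^ l with hT
  have hdId : T - v ∈ IdWith F (starUT F) := by
    intro φ hφ
    have hTv : φ T = φ v := by
      set LA : List ↥(UT2 F) := List.ofFn fun i : Fin n => φ (yv F (i : ℕ)) with hLA
      have hLAdeq : ∀ A ∈ LA, Deq A := by
        intro A hA
        rw [hLA, List.mem_ofFn] at hA
        obtain ⟨i, rfl⟩ := hA
        exact deq_of_star F (hφ.1 i)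
      have hmapL : L.map φ = LA := by
        rw [hL, hLA, List.map_ofFn]; rfl
      have hφP : φ P = LA.prod := by rw [hP, map_list_prod, hmapL]
      have hφPrev : φ L.reverse.prod = LA.prod := by
        rw [map_list_prod, List.map_reverse, hmapL, prod_reverse_deq F hLAdeq]
      have h2 : (2 : F) ≠ 0 := Ring.two_ne_zero hchar
      have hφg₁ : φ g₁ = LA.prod := by
        rw [hg₁def, map_smul, map_add, hφP, hφPrev, ← two_smul F, smul_smul,
          inv_mul_cancel₀ h2, one_smul]
      have hφPq : φ Pq = LA.prod ^ q := by
        rw [hPq, map_list_prod, List.map_ofFn, prod_pow_deq F hLAdeq q, hLA, List.map_ofFn]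
        simp [Function.comp_def, map_pow]
      rw [hT, hv]
      simp only [map_add, map_smul, map_mul, map_sub, map_pow, hφP, hφg₁, hφPq]
    rw [map_sub, hTv, sub_self]
  have : T = v + (T - v) := by abel
  rw [this]
  exact add_mem (Submodule.mem_sup_left hvV) (Submodule.mem_sup_right hdId)
end

section
/- Let F be a finite field with |F| = q elements and char(F) ≠ 2, and let f = Σ_{i=0}^{2q−1} α_i y_1^i ∈ F⟨Y∪Z⟩ with α_0, …, α_{2q−1} ∈ F. If f ∈ C(UT_2(F), ⋆), then f ∈ V + Id(UT_2(F), ⋆). -/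
open scoped BigOperators

set_option maxHeartbeats 1000000
set_option synthInstance.maxHeartbeats 400000

section AuxLemmas

variable (F : Type*) [Field F]

theorem pow_tri (a : F) : ∀ i : ℕ,
    (!![a, 1; 0, a] : Matrix (Fin 2) (Fin 2) F) ^ i = !![a ^ i, (i : F) * a ^ (i - 1); 0, a ^ i] := by
  intro i
  induction i with
  | zero => simp [Matrix.one_fin_two]
  | succ n ih =>
    rw [pow_succ, ih]
    cases n with
    | zero => norm_num [Matrix.mul_fin_two]
    | succ m =>
      rw [Matrix.mul_fin_two]
      ext i j
      fin_cases i <;> fin_cases j <;> simp [Nat.add_sub_cancel] <;> ring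

theorem isSym_one : IsSym F 1 := by
  unfold IsSym fStar
  rw [map_one]
  rfl

theorem isSym_y (i : ℕ) : IsSym F (yv F i) := by
  unfold IsSym fStar fStarAux yv
  simp [FreeAlgebra.lift_ι_apply]

theorem gen_mem (q l : ℕ) (g₁ g₂ : FA F) (h1 : IsSym F g₁) (h2 : IsSym F g₂) :
    (l : F) • (g₁ * (g₂ ^ (q + l - 1) - g₂ ^ l)) + g₁ ^ q * g₂ ^ l ∈ Vspan F q :=
  Submodule.subset_span ⟨l, g₁, g₂, h1, h2, rfl⟩

theorem mono_mem (q n : ℕ) (hn : ((n : ℕ) : F) = 0) : (yv F 0) ^ n ∈ Vspan F q := by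
  have h := gen_mem F q n 1 (yv F 0) (isSym_one F) (isSym_y F 0)
  simpa [hn] using h

theorem u_mem (q l : ℕ) :
    ((l : ℕ) : F) • ((yv F 0) ^ (q + l - 1) - (yv F 0) ^ l) + (yv F 0) ^ l ∈ Vspan F q := by
  have h := gen_mem F q l 1 (yv F 0) (isSym_one F) (isSym_y F 0)
  simpa using h

theorem yq_mem (q : ℕ) (hq1 : 1 ≤ q) : (yv F 0) ^ q ∈ Vspan F q := by
  have h := u_mem F q 1
  have he : q + 1 - 1 = q := by omega
  rw [he] at h
  simpa using h


theorem pair_mem (q : ℕ) (hq1 : 1 ≤ q) (j : ℕ) (A B : F)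
    (hrel : ((j : F) + 2) * A + ((j : F) + 1) * B = 0) :
    A • (yv F 0) ^ (j + 2) + B • (yv F 0) ^ (q + j + 1) ∈ Vspan F q := by
  set y := yv F 0 with hy
  by_cases hb : ((j : F) + 2) = 0
  · have hB : B = 0 := by
      have h1 : ((j : F) + 1) = -1 := by linear_combination hb
      rw [hb, h1] at hrel
      linear_combination -hrel
    rw [hB, zero_smul, add_zero]
    refine Submodule.smul_mem _ _ (mono_mem F q (j + 2) ?_)
    push_cast
    exact hb
  · have hu := u_mem F q (j + 2)
    have he : q + (j + 2) - 1 = q + j + 1 := by omega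
    rw [he] at hu
    have hc : ((j + 2 : ℕ) : F) = (j : F) + 2 := by push_cast; ring
    rw [hc] at hu
    have hmem := Submodule.smul_mem (Vspan F q) (B / ((j : F) + 2)) hu
    have hA : A = (1 - ((j : F) + 2)) * B / ((j : F) + 2) := by
      field_simp
      linear_combination hrel
    have heq : (B / ((j : F) + 2)) • (((j : F) + 2) • (y ^ (q + j + 1) - y ^ (j + 2)) + y ^ (j + 2))
        = A • y ^ (j + 2) + B • y ^ (q + j + 1) := by
      rw [hA]
      match_scalars <;> field_simp <;> ring
    rw [← heq]
    exact hmem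

theorem center_entry (m : ↥(UT2 F)) (hm : m ∈ Subalgebra.center F ↥(UT2 F)) :
    (m : Matrix (Fin 2) (Fin 2) F) 0 1 = 0 := by
  have hE : (!![(1:F), 0; 0, 0] : Matrix (Fin 2) (Fin 2) F) ∈ UT2 F := by
    rw [mem_UT2]; simp
  have h := (Subalgebra.mem_center_iff.mp hm) ⟨_, hE⟩
  have h' := congrArg (fun x : ↥(UT2 F) => x.1 0 1) h
  simp only [MulMemClass.coe_mul] at h'
  rw [Matrix.mul_apply, Matrix.mul_apply, Fin.sum_univ_two, Fin.sum_univ_two] at h'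
  simpa using h'


theorem starUT_zero : starUT F 0 = 0 := by
  unfold starUT
  apply Subtype.ext
  show !![(0 : ↥(UT2 F)).1 1 1, (0 : ↥(UT2 F)).1 0 1; 0, (0 : ↥(UT2 F)).1 0 0] = 0
  ext i j
  fin_cases i <;> fin_cases j <;> simp

noncomputable def subst (M : ↥(UT2 F)) : FA F →ₐ[F] ↥(UT2 F) :=
  FreeAlgebra.lift F (Sum.elim (fun i => if i = 0 then M else 0) (fun _ => 0))

theorem subst_y0 (M : ↥(UT2 F)) : subst F M (yv F 0) = M := by
  unfold subst yv
  simp [FreeAlgebra.lift_ι_apply]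

theorem subst_isSubst (M : ↥(UT2 F)) (hM : starUT F M = M) :
    IsSubstWith F (starUT F) (subst F M) := by
  constructor
  · intro i
    unfold subst yv
    rw [FreeAlgebra.lift_ι_apply]
    by_cases h : i = 0
    · simp [h, hM]
    · simp [h, starUT_zero]
  · intro i
    unfold subst zv
    rw [FreeAlgebra.lift_ι_apply]
    simp [starUT_zero]

theorem S_eval (K : Type*) [Field K] [Fintype K] (n : ℕ) :
    ∑ a : K, a ^ n = if n ≠ 0 ∧ (Fintype.card K - 1) ∣ n then -1 else 0 := by
  classical
  by_cases hn : n = 0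
  · simp [hn, Finset.card_univ, FiniteField.cast_card_eq_zero]
  · simp only [hn, ne_eq, not_false_iff, true_and]
    let φ : Kˣ ↪ K := ⟨fun x ↦ x, fun _ _ h => Units.ext h⟩
    have huniv : Finset.univ.map φ = Finset.univ \ {0} := by
      ext x
      simp only [Finset.mem_map, Finset.mem_univ, Function.Embedding.coeFn_mk, true_and,
        Finset.mem_sdiff, Finset.mem_singleton, φ]
      exact isUnit_iff_ne_zero
    calc
      ∑ a : K, a ^ n = ∑ a ∈ Finset.univ \ {(0 : K)}, a ^ n := by
        rw [← Finset.sum_sdiff (Finset.subset_univ {0}), Finset.sum_singleton, zero_pow hn,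
          add_zero]
      _ = ∑ x : Kˣ, (x : K) ^ n := by rw [← huniv, Finset.sum_map]; rfl
      _ = if Fintype.card K - 1 ∣ n then -1 else 0 := by
        simpa using FiniteField.sum_pow_units K n


theorem splitsum (M : Type*) [AddCommMonoid M] (g : ℕ → M) (n : ℕ) :
    (∑ x ∈ Finset.range (2*n+6), g x) =
    ((∑ k ∈ Finset.range (n+1), g (k+2)) + (∑ k ∈ Finset.range (n+1), g (n+4+k)))
      + g 0 + g 1 + g (n+3) + g (2*n+5) := by
  rw [show 2*n+6 = 1+(1+((n+1) + (1 + ((n+1) + 1)))) by ring]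
  rw [Finset.sum_range_add g 1 (1 + ((n+1) + (1 + ((n+1) + 1))))]
  rw [Finset.sum_range_add (fun x => g (1+x)) 1 ((n+1) + (1 + ((n+1) + 1)))]
  rw [Finset.sum_range_add (fun x => g (1+(1+x))) (n+1) (1 + ((n+1) + 1))]
  rw [Finset.sum_range_add (fun x => g (1+(1+((n+1)+x)))) 1 ((n+1) + 1)]
  rw [Finset.sum_range_add (fun x => g (1+(1+((n+1)+(1+x))))) (n+1) 1]
  simp only [Finset.sum_range_one]
  have c1 : ∑ x ∈ Finset.range (n+1), g (1+(1+x)) = ∑ k ∈ Finset.range (n+1), g (k+2) :=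
    Finset.sum_congr rfl fun x _ => by rw [show 1+(1+x) = x+2 by omega]
  have c2 : ∑ x ∈ Finset.range (n+1), g (1+(1+((n+1)+(1+x)))) =
      ∑ k ∈ Finset.range (n+1), g (n+4+k) :=
    Finset.sum_congr rfl fun x _ => by rw [show 1+(1+((n+1)+(1+x))) = n+4+x by omega]
  rw [c1, c2, show 1+0 = 1 by rfl, show 1+(1+((n+1)+0)) = n+3 by omega,
    show 1+(1+((n+1)+(1+((n+1)+0)))) = 2*n+5 by omega]
  abel

end AuxLemmas




theorem stmt_14 (F : Type*) [Field F] [Fintype F] (q : ℕ) (hq : Fintype.card F = q)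
    (hchar : ringChar F ≠ 2) (α : ℕ → F)
    (f : FA F) (hf : f = ∑ i ∈ Finset.range (2 * q), α i • (yv F 0) ^ i)
    (hc : f ∈ CWith F (starUT F)) :
    f ∈ Vspan F q ⊔ IdWith F (starUT F) := by
  classical
  set y := yv F 0 with hy
  have hq0 : ((q : ℕ) : F) = 0 := by rw [← hq]; exact FiniteField.cast_card_eq_zero F
  have hq2 : 2 ≤ q := by rw [← hq]; exact Fintype.one_lt_card
  have hq3 : 3 ≤ q := by
    rcases Nat.lt_or_ge q 3 with h | h
    · exfalso
      have hq2' : q = 2 := by omega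
      have hd : ringChar F ∣ 2 := by
        apply ringChar.dvd
        rw [show ((2:ℕ):F) = ((q:ℕ):F) by rw [hq2']]
        exact hq0
      have := Nat.Prime.eq_one_or_self_of_dvd Nat.prime_two _ hd
      rcases this with h1 | h1
      · exact CharP.ringChar_ne_one h1
      · exact hchar h1
    · exact h
  -- Step 1: the scalar identity coming from centrality
  have key : ∀ a : F, ∑ i ∈ Finset.range (2*q), α i * ((i : F) * a ^ (i-1)) = 0 := by
    intro a
    have hM : (!![a,1;0,a] : Matrix (Fin 2) (Fin 2) F) ∈ UT2 F := by rw [mem_UT2]; simp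
    set M : ↥(UT2 F) := ⟨_, hM⟩ with hMdef
    have hstar : starUT F M = M := by
      apply Subtype.ext
      show !![M.1 1 1, M.1 0 1; 0, M.1 0 0] = M.1
      show !![(!![a,1;0,a] : Matrix (Fin 2) (Fin 2) F) 1 1, _; 0, _] = _
      norm_num
      ext i j
      fin_cases i <;> fin_cases j <;> rfl
    have hcm := hc (subst F M) (subst_isSubst F M hstar)
    have hent := center_entry F _ hcm
    have hval : (subst F M f).1 0 1 = ∑ i ∈ Finset.range (2*q), α i * ((i : F) * a ^ (i-1)) := by
      rw [hf, map_sum, AddSubmonoidClass.coe_finset_sum, Matrix.sum_apply]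
      apply Finset.sum_congr rfl
      intro i _
      rw [map_smul, map_pow, subst_y0]
      have hcoe : ((α i • M ^ i : ↥(UT2 F)) : Matrix (Fin 2) (Fin 2) F)
          = α i • ((M : Matrix (Fin 2) (Fin 2) F)) ^ i := by
        rw [← SubmonoidClass.coe_pow]
        rfl
      rw [hcoe]
      show α i • ((!![a,1;0,a] : Matrix (Fin 2) (Fin 2) F) ^ i) 0 1 = _
      rw [pow_tri F a i]
      norm_num
    rw [hval] at hent
    exact hent
  -- Step 2: reindex
  set c : ℕ → F := fun k => ((k : F) + 1) * α (k+1) with hcdef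
  have key1 : ∀ a : F, ∑ k ∈ Finset.range (2*q-1), c k * a ^ k = 0 := by
    intro a
    have h := key a
    rw [show 2*q = (2*q-1)+1 by omega, Finset.sum_range_succ'] at h
    simp only [Nat.cast_zero, zero_mul, mul_zero, add_zero] at h
    rw [← h]
    apply Finset.sum_congr rfl
    intro k _
    rw [Nat.add_sub_cancel]
    push_cast
    ring
  -- Step 3: power-sum relations
  have key2 : ∀ m : ℕ, ∑ k ∈ (Finset.range (2*q-1)).filter
      (fun k => k+m ≠ 0 ∧ (q-1) ∣ (k+m)), c k = 0 := by
    intro m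
    have h0 : ∑ a : F, (a ^ m * ∑ k ∈ Finset.range (2*q-1), c k * a ^ k) = 0 := by
      apply Finset.sum_eq_zero
      intro a _
      rw [key1 a, mul_zero]
    have h1 : ∀ a : F, a ^ m * ∑ k ∈ Finset.range (2*q-1), c k * a ^ k
        = ∑ k ∈ Finset.range (2*q-1), c k * a ^ (k+m) := by
      intro a
      rw [Finset.mul_sum]
      exact Finset.sum_congr rfl fun k _ => by rw [pow_add]; ring
    rw [Finset.sum_congr rfl (fun a _ => h1 a), Finset.sum_comm] at h0
    have h2 : ∀ k ∈ Finset.range (2*q-1), ∑ a : F, c k * a ^ (k+m)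
        = -(if k+m ≠ 0 ∧ (q-1) ∣ (k+m) then c k else 0) := by
      intro k _
      rw [← Finset.mul_sum, S_eval F (k+m), hq]
      split_ifs <;> ring
    rw [Finset.sum_congr rfl h2, Finset.sum_neg_distrib, neg_eq_zero, ← Finset.sum_filter] at h0
    exact h0
  -- evaluate filters
  have hfil : ∀ m : ℕ, m ≤ q-1 → (Finset.range (2*q-1)).filter
      (fun k => k+m ≠ 0 ∧ (q-1) ∣ (k+m))
      = (Finset.range (2*q-1)).filter (fun k => ∃ t, t ≤ 3 ∧ k + m = (q-1)*t ∧ t ≠ 0) := by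
    intro m hm
    ext k
    simp only [Finset.mem_filter, Finset.mem_range, ne_eq]
    constructor
    · rintro ⟨hk, hne, t, ht⟩
      refine ⟨hk, t, ?_, ht, ?_⟩
      · by_contra hge
        push_neg at hge
        have : (q-1)*4 ≤ (q-1)*t := Nat.mul_le_mul_left _ (by omega)
        omega
      · rintro rfl
        omega
    · rintro ⟨hk, t, _, ht, htne⟩
      have h1 : (q-1)*1 ≤ (q-1)*t := Nat.mul_le_mul_left _ (by omega)
      exact ⟨hk, by omega, t, ht⟩
  -- relation R1 (m = 0)
  have hR1 : c (q-1) + c (2*q-2) = 0 := by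
    have h := key2 0
    rw [hfil 0 (by omega)] at h
    have hset : (Finset.range (2*q-1)).filter
        (fun k => ∃ t, t ≤ 3 ∧ k + 0 = (q-1)*t ∧ t ≠ 0) = {q-1, 2*q-2} := by
      ext k
      simp only [Finset.mem_filter, Finset.mem_range, Finset.mem_insert, Finset.mem_singleton]
      constructor
      · rintro ⟨hk, t, ht3, ht, htne⟩
        interval_cases t <;> omega
      · rintro (rfl | rfl)
        · exact ⟨by omega, 1, by omega, by omega, by omega⟩
        · exact ⟨by omega, 2, by omega, by omega, by omega⟩
    rw [hset, Finset.sum_insert (by simp; omega), Finset.sum_singleton] at h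
    exact h
  -- relation R2 (m = q-1)
  have hR2 : c 0 + (c (q-1) + c (2*q-2)) = 0 := by
    have h := key2 (q-1)
    rw [hfil (q-1) (by omega)] at h
    have hset : (Finset.range (2*q-1)).filter
        (fun k => ∃ t, t ≤ 3 ∧ k + (q-1) = (q-1)*t ∧ t ≠ 0) = {0, q-1, 2*q-2} := by
      ext k
      simp only [Finset.mem_filter, Finset.mem_range, Finset.mem_insert, Finset.mem_singleton]
      constructor
      · rintro ⟨hk, t, ht3, ht, htne⟩
        interval_cases t <;> omega
      · rintro (rfl | rfl | rfl)
        · exact ⟨by omega, 1, by omega, by omega, by omega⟩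
        · exact ⟨by omega, 2, by omega, by omega, by omega⟩
        · exact ⟨by omega, 3, by omega, by omega, by omega⟩
    rw [hset, Finset.sum_insert (by simp; omega),
      Finset.sum_insert (by simp; omega), Finset.sum_singleton] at h
    exact h
  -- relation R3 (pairs)
  have hR3 : ∀ j : ℕ, j + 3 ≤ q → c (j+1) + c (q+j) = 0 := by
    intro j hj
    have h := key2 (q-2-j)
    rw [hfil (q-2-j) (by omega)] at h
    have hset : (Finset.range (2*q-1)).filter
        (fun k => ∃ t, t ≤ 3 ∧ k + (q-2-j) = (q-1)*t ∧ t ≠ 0) = {j+1, q+j} := by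
      ext k
      simp only [Finset.mem_filter, Finset.mem_range, Finset.mem_insert, Finset.mem_singleton]
      constructor
      · rintro ⟨hk, t, ht3, ht, htne⟩
        interval_cases t <;> omega
      · rintro (rfl | rfl)
        · exact ⟨by omega, 1, by omega, by omega, by omega⟩
        · exact ⟨by omega, 2, by omega, by omega, by omega⟩
    rw [hset, Finset.sum_insert (by simp; omega), Finset.sum_singleton] at h
    exact h
  -- coefficient facts
  have hcq1 : c (q-1) = 0 := by
    have hcast : ((q-1 : ℕ) : F) = -1 := by
      rw [Nat.cast_sub (by omega : 1 ≤ q), hq0]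
      simp
    have h1 : c (q-1) = (((q-1 : ℕ) : F) + 1) * α (q-1+1) := rfl
    rw [h1, hcast]
    ring
  have h2q1 : α (2*q-1) = 0 := by
    have hcast : ((2*q-2 : ℕ) : F) = -2 := by
      rw [Nat.cast_sub (by omega : 2 ≤ 2*q)]
      push_cast [hq0]
      ring
    have hc2 : c (2*q-2) = -α (2*q-1) := by
      have h1 : c (2*q-2) = (((2*q-2 : ℕ) : F) + 1) * α (2*q-2+1) := rfl
      rw [h1, hcast, show 2*q-2+1 = 2*q-1 by omega]
      ring
    rw [hcq1, hc2] at hR1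
    linear_combination -hR1
  have ha1 : α 1 = 0 := by
    rw [hR1] at hR2
    have h0 : c 0 = α 1 := by simp [hcdef]
    rw [h0] at hR2
    linear_combination hR2
  have hpair : ∀ j : ℕ, j + 3 ≤ q → ((j:F)+2) * α (j+2) + ((j:F)+1) * α (q+j+1) = 0 := by
    intro j hj
    have h := hR3 j hj
    have e1 : c (j+1) = ((j:F)+2) * α (j+2) := by
      have h1 : c (j+1) = (((j+1 : ℕ) : F) + 1) * α (j+1+1) := rfl
      rw [h1, show j+1+1 = j+2 by omega]
      push_cast
      ring
    have e2 : c (q+j) = ((j:F)+1) * α (q+j+1) := by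
      have h1 : c (q+j) = (((q+j : ℕ) : F) + 1) * α (q+j+1) := rfl
      rw [h1]
      push_cast [hq0]
      ring
    rw [e1, e2] at h
    exact h
  -- assembly
  obtain ⟨n, rfl⟩ : ∃ n, q = n + 3 := ⟨q - 3, by omega⟩
  have hgs := splitsum (FA F) (fun i => α i • y^i) n
  rw [hf, show 2*(n+3) = 2*n+6 by ring, hgs, ← Finset.sum_add_distrib]
  apply Submodule.mem_sup_left
  refine Submodule.add_mem _ (Submodule.add_mem _ (Submodule.add_mem _
    (Submodule.add_mem _ ?_ ?_) ?_) ?_) ?_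
  · -- the pair sums
    apply Submodule.sum_mem
    intro k hk
    rw [Finset.mem_range] at hk
    rw [show n+4+k = (n+3)+k+1 by omega]
    exact pair_mem F (n+3) (by omega) k _ _ (hpair k (by omega))
  · -- α 0 • y^0
    exact Submodule.smul_mem _ _ (mono_mem F (n+3) 0 (by simp))
  · -- α 1 • y^1
    rw [ha1, zero_smul]
    exact zero_mem _
  · -- α (n+3) • y^(n+3)
    exact Submodule.smul_mem _ _ (yq_mem F (n+3) (by omega))
  · -- α (2n+5) • y^(2n+5)
    rw [show 2*n+5 = 2*(n+3)-1 by omega, h2q1, zero_smul]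
    exact zero_mem _
end

section
/- Let F be a finite field with |F| = q elements and char(F) = p ≠ 2. For every Y ∈ UT_2(F) symmetric for ⋆, one has Y^{pq} = Y^p. -/
open scoped BigOperators

set_option maxHeartbeats 1000000
set_option synthInstance.maxHeartbeats 400000

theorem stmt_15 (F : Type*) [Field F] [Fintype F] (q : ℕ) (hq : Fintype.card F = q)
    (p : ℕ) [CharP F p] (hp : p ≠ 2)
    (Y : ↥(UT2 F)) (hY : starUT F Y = Y) :
    Y ^ (p * q) = Y ^ p := by
  haveI : Fact p.Prime := ⟨CharP.char_is_prime F p⟩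
  set M : Matrix (Fin 2) (Fin 2) F := (Y : Matrix (Fin 2) (Fin 2) F) with hM
  have h10 : M 1 0 = 0 := Y.2
  have hstar : (!![M 1 1, M 0 1; 0, M 0 0] : Matrix (Fin 2) (Fin 2) F) = M :=
    congrArg Subtype.val hY
  have h00 : M 1 1 = M 0 0 := by
    have := congrFun (congrFun hstar 0) 0
    simpa using this
  set a := M 0 0 with ha
  set c := M 0 1 with hc
  set N : Matrix (Fin 2) (Fin 2) F := !![0, 1; 0, 0] with hN
  have hMeq : M = a • (1 : Matrix (Fin 2) (Fin 2) F) + c • N := by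
    ext i j
    fin_cases i <;> fin_cases j <;>
      simp [hN, Matrix.one_apply, h10, h00, ha, hc]
  have hNN : N * N = 0 := by
    ext i j
    fin_cases i <;> fin_cases j <;> simp [hN, Matrix.mul_apply, Fin.sum_univ_two]
  have hcomm : Commute (a • (1 : Matrix (Fin 2) (Fin 2) F)) (c • N) := by
    unfold Commute SemiconjBy
    simp [smul_mul_assoc, mul_smul_comm, smul_comm a c]
  have hp2 : 2 ≤ p := Nat.Prime.two_le (Fact.out (p := p.Prime))
  have hNp : (c • N) ^ p = 0 := by
    calc (c • N) ^ p = (c • N) ^ 2 * (c • N) ^ (p - 2) := by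
          rw [← pow_add]; congr 1; omega
      _ = 0 := by
          rw [pow_two, smul_mul_smul_comm, hNN, smul_zero, zero_mul]
  have hMp : M ^ p = (a ^ p) • (1 : Matrix (Fin 2) (Fin 2) F) := by
    rw [hMeq, add_pow_char_of_commute _ hcomm, hNp, add_zero, smul_pow, one_pow]
  have hMpq : M ^ (p * q) = M ^ p := by
    rw [pow_mul, hMp, smul_pow, one_pow, ← hq, FiniteField.pow_card]
  apply Subtype.ext
  rw [SubmonoidClass.coe_pow, SubmonoidClass.coe_pow]
  exact hMpq
end

section
/- Let F be a field with char(F) ≠ 2. Then C(UT_2(F), s) = Id(UT_2(F), s) + F⟨Y∪Z⟩⁺; that is, a polynomial f ∈ F⟨Y∪Z⟩ is *-central for (UT_2(F), s) if and only if f = g + h where g is a *-polynomial identity for (UT_2(F), s) and h is a symmetric polynomial (h* = h). -/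
open scoped BigOperators

set_option maxHeartbeats 1000000
set_option synthInstance.maxHeartbeats 400000

/-- The symmetric polynomials `F⟨Y ∪ Z⟩⁺` as a submodule. -/
def SymSub (F : Type*) [Field F] : Submodule F (FA F) where
  carrier := {f | IsSym F f}
  add_mem' := by
    intro a b ha hb
    simp only [Set.mem_setOf_eq, IsSym, fStar, map_add, MulOpposite.unop_add] at *
    rw [ha, hb]
  zero_mem' := by simp [IsSym, fStar]
  smul_mem' := by
    intro c x hx
    simp only [Set.mem_setOf_eq, IsSym, fStar, map_smul, MulOpposite.unop_smul] at *
    rw [hx]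
section Aux

variable (F : Type*) [Field F]

lemma starS_val (M : ↥(UT2 F)) :
    (starS F M).1 = !![M.1 1 1, -(M.1 0 1); 0, M.1 0 0] := rfl

lemma UT2_mul_val (x y : ↥(UT2 F)) : (x * y).1 = x.1 * y.1 := rfl

lemma UT2_ext {x y : ↥(UT2 F)} (h00 : x.1 0 0 = y.1 0 0)
    (h01 : x.1 0 1 = y.1 0 1) (h11 : x.1 1 1 = y.1 1 1) : x = y := by
  apply Subtype.ext
  ext i j
  fin_cases i <;> fin_cases j
  · exact h00
  · exact h01
  · exact (x.2 : x.1 1 0 = 0).trans (y.2 : y.1 1 0 = 0).symm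
  · exact h11

/-- `starS` as an algebra anti-homomorphism. -/
noncomputable def starSHom : ↥(UT2 F) →ₐ[F] (↥(UT2 F))ᵐᵒᵖ where
  toFun M := MulOpposite.op (starS F M)
  map_one' := by
    show MulOpposite.op _ = _
    rw [← MulOpposite.op_one]
    congr 1
    apply UT2_ext <;> simp [starS_val, OneMemClass.coe_one, Matrix.one_apply]
  map_mul' := fun x y => by
    show MulOpposite.op _ = _
    rw [← MulOpposite.op_mul]
    congr 1
    have hx : x.1 1 0 = 0 := x.2
    have hy : y.1 1 0 = 0 := y.2
    apply UT2_ext <;>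
      simp [starS_val, UT2_mul_val, Matrix.mul_apply, Fin.sum_univ_two, hx, hy] <;> ring
  map_zero' := by
    show MulOpposite.op _ = _
    rw [← MulOpposite.op_zero]
    congr 1
    apply UT2_ext <;> simp [starS_val, ZeroMemClass.coe_zero]
  map_add' := fun x y => by
    show MulOpposite.op _ = _
    rw [← MulOpposite.op_add]
    congr 1
    apply UT2_ext <;> simp [starS_val, AddMemClass.coe_add] <;> ring
  commutes' := fun r => by
    show MulOpposite.op _ = _
    rw [MulOpposite.algebraMap_apply]
    congr 1
    apply UT2_ext <;>
      simp [starS_val, Subalgebra.coe_algebraMap, Matrix.algebraMap_matrix_apply]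

end Aux
section Aux2

variable (F : Type*) [Field F]

lemma fStar_zv (i : ℕ) : fStar F (zv F i) = -zv F i := by
  simp [fStar, fStarAux, zv, FreeAlgebra.lift_ι_apply]

lemma fStar_algebraMap (r : F) :
    fStar F (algebraMap F (FA F) r) = algebraMap F (FA F) r := by
  simp [fStar, AlgHom.commutes, MulOpposite.algebraMap_apply]

lemma fStar_neg (a : FA F) : fStar F (-a) = -fStar F a := by
  simp [fStar, map_neg]

lemma fStar_fStar (f : FA F) : fStar F (fStar F f) = f := by
  induction f using FreeAlgebra.induction with
  | grade0 r => rw [fStar_algebraMap, fStar_algebraMap]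
  | grade1 v =>
    rcases v with i | i
    · rw [show FreeAlgebra.ι F (Sum.inl i) = yv F i from rfl, fStar_yv, fStar_yv]
    · rw [show FreeAlgebra.ι F (Sum.inr i) = zv F i from rfl, fStar_zv, fStar_neg,
        fStar_zv, neg_neg]
  | mul a b ha hb => rw [fStar_mul, fStar_mul, ha, hb]
  | add a b ha hb => rw [fStar_add, fStar_add, ha, hb]

/-- The key intertwining lemma: substitutions intertwine `fStar` and `starS`. -/
lemma subst_fStar (φ : FA F →ₐ[F] ↥(UT2 F)) (hφ : IsSubstWith F (starS F) φ)
    (f : FA F) : φ (fStar F f) = starS F (φ f) := by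
  have key : (AlgHom.op φ).comp (fStarAux F) = (starSHom F).comp φ := by
    apply FreeAlgebra.hom_ext
    funext v
    rcases v with i | i
    · simp only [Function.comp_apply, AlgHom.coe_comp, fStarAux,
        FreeAlgebra.lift_ι_apply, Sum.elim_inl, AlgHom.op_apply_apply,
        MulOpposite.unop_op]
      show MulOpposite.op (φ (yv F i)) = MulOpposite.op (starS F (φ (yv F i)))
      rw [hφ.1 i]
    · simp only [Function.comp_apply, AlgHom.coe_comp, fStarAux,
        FreeAlgebra.lift_ι_apply, Sum.elim_inr, AlgHom.op_apply_apply,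
        MulOpposite.unop_op, map_neg, MulOpposite.op_neg]
      show -MulOpposite.op (φ (zv F i)) = MulOpposite.op (starS F (φ (zv F i)))
      rw [hφ.2 i, MulOpposite.op_neg]
  have := DFunLike.congr_fun key f
  simp only [AlgHom.coe_comp, Function.comp_apply] at this
  have h2 : MulOpposite.op (φ (fStar F f)) = MulOpposite.op (starS F (φ f)) := by
    rw [fStar]
    rw [show MulOpposite.op (φ ((fStarAux F f).unop)) = AlgHom.op φ (fStarAux F f) from rfl]
    exact this
  exact MulOpposite.op_injective h2

end Aux2
section Aux3

variable (F : Type*) [Field F]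

lemma central_iff_fixed (hchar : ringChar F ≠ 2) (M : ↥(UT2 F)) :
    M ∈ Subalgebra.center F ↥(UT2 F) ↔ starS F M = M := by
  constructor
  · intro hM
    rw [Subalgebra.mem_center_iff] at hM
    have e11 : (⟨!![(1:F),0;0,0], by rw [mem_UT2]; simp⟩ : ↥(UT2 F)) ∈ Set.univ :=
      Set.mem_univ _
    set E11 : ↥(UT2 F) := ⟨!![(1:F),0;0,0], by rw [mem_UT2]; simp⟩ with hE11
    set E12 : ↥(UT2 F) := ⟨!![(0:F),1;0,0], by rw [mem_UT2]; simp⟩ with hE12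
    have h1 := congrArg (fun x => x.1 0 1) (hM E11)
    have h2 := congrArg (fun x => x.1 0 1) (hM E12)
    simp only [UT2_mul_val, hE11, hE12, Matrix.mul_apply, Fin.sum_univ_two] at h1 h2
    norm_num [Matrix.cons_val_zero, Matrix.cons_val_one, Matrix.head_cons] at h1 h2
    have hM10 : M.1 1 0 = 0 := M.2
    have h01 : M.1 0 1 = 0 := h1
    have h00 : M.1 1 1 = M.1 0 0 := h2
    apply UT2_ext <;> simp [starS_val, h01, h00]
  · intro hM
    have h := congrArg (fun x => x.1) hM
    have h00 : M.1 1 1 = M.1 0 0 := by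
      have := congrFun (congrFun h 0) 0
      simpa [starS_val] using this
    have h01 : M.1 0 1 = 0 := by
      have := congrFun (congrFun h 0) 1
      simp only [starS_val, Matrix.cons_val_zero, Matrix.cons_val_one, Matrix.head_cons,
        Matrix.cons_val', Matrix.empty_val'] at this
      exact (Ring.eq_self_iff_eq_zero_of_char_ne_two hchar).mp this
    rw [Subalgebra.mem_center_iff]
    intro b
    have hb : b.1 1 0 = 0 := b.2
    have hM10 : M.1 1 0 = 0 := M.2
    apply UT2_ext <;>
      simp [UT2_mul_val, Matrix.mul_apply, Fin.sum_univ_two, hb, hM10, h01, h00] <;> ring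

end Aux3
theorem stmt_19 (F : Type*) [Field F] (hchar : ringChar F ≠ 2) :
    CWith F (starS F) = IdWith F (starS F) ⊔ SymSub F := by
  have h2 : (2 : F) ≠ 0 := Ring.two_ne_zero hchar
  apply le_antisymm
  · intro f hf
    set g : FA F := (2⁻¹ : F) • (f - fStar F f) with hg
    set h : FA F := (2⁻¹ : F) • (f + fStar F f) with hh
    have hfgh : f = g + h := by
      rw [hg, hh, ← smul_add]
      rw [show f - fStar F f + (f + fStar F f) = (2:F) • f by
        rw [two_smul]; abel]
      rw [smul_smul, inv_mul_cancel₀ h2, one_smul]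
    have hgId : g ∈ IdWith F (starS F) := by
      intro φ hφ
      have hc := hf φ hφ
      rw [central_iff_fixed F hchar] at hc
      rw [hg, map_smul, map_sub, subst_fStar F φ hφ, hc, sub_self, smul_zero]
    have hhSym : h ∈ SymSub F := by
      show IsSym F h
      unfold IsSym
      rw [hh]
      have : fStar F ((2⁻¹ : F) • (f + fStar F f))
          = (2⁻¹ : F) • fStar F (f + fStar F f) := by
        simp [fStar, map_smul]
      rw [this, fStar_add, fStar_fStar, add_comm]
    rw [hfgh]
    exact add_mem (Submodule.mem_sup_left hgId) (Submodule.mem_sup_right hhSym)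
  · rw [sup_le_iff]
    constructor
    · intro f hf φ hφ
      rw [hf φ hφ]
      exact zero_mem _
    · intro f hf φ hφ
      rw [central_iff_fixed F hchar]
      rw [← subst_fStar F φ hφ, hf]
end
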